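/- Let S be a finite set and let f : 2^S → ℝ be a normalized monotone submodular function. Then for every subset A ⊆ S, f(A) = sup { x(A) : x ∈ P_f }, where the supremum is over the polymatroid of f; moreover the supremum is attained. -/

import Mathlib

/-- For a finite ground set `S` (modelled as a finite type `ι`) and a normalized
monotone submodular function `f : 2^S → ℝ`, for every `A ⊆ S` the value `f A` is
the supremum of `x(A)` over the polymatroid `P_f`, and this supremum is attained
(i.e. `f A` is the greatest element of the set of such values). -/
theorem polymatroid_sup {ι : Type*} [Fintype ι] [DecidableEq ι]
    (f : Finset ι → ℝ)
    (hnorm : f ∅ = 0)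
    (hmono : ∀ A B : Finset ι, A ⊆ B → f A ≤ f B)
    (hsub : ∀ A B : Finset ι, A ⊆ B → ∀ v ∉ B,
      f (insert v A) - f A ≥ f (insert v B) - f B)
    (A : Finset ι) :
    IsGreatest {r : ℝ | ∃ x : ι → ℝ, (∀ i, 0 ≤ x i) ∧
      (∀ B : Finset ι, ∑ i ∈ B, x i ≤ f B) ∧ r = ∑ i ∈ A, x i} (f A) := by
  constructor
  · -- attainment: greedy construction, by induction on A
    suffices h : ∃ x : ι → ℝ, (∀ i, 0 ≤ x i) ∧ (∀ B : Finset ι, ∑ i ∈ B, x i ≤ f B) ∧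
        (∀ i, i ∉ A → x i = 0) ∧ ∑ i ∈ A, x i = f A by
      obtain ⟨x, h1, h2, _, h4⟩ := h
      exact ⟨x, h1, h2, h4.symm⟩
    induction A using Finset.induction_on with
    | empty =>
      refine ⟨0, fun i => le_refl 0, ?_, fun i _ => rfl, by simp [hnorm]⟩
      intro B
      simp only [Pi.zero_apply, Finset.sum_const_zero]
      rw [← hnorm]
      exact hmono ∅ B (Finset.empty_subset B)
    | @insert v A' hv ih =>
      obtain ⟨x, hx0, hxf, hxs, hxA⟩ := ih
      set c : ℝ := f (insert v A') - f A' with hc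
      have hc0 : 0 ≤ c := sub_nonneg.mpr (hmono A' (insert v A') (Finset.subset_insert v A'))
      set y : ι → ℝ := fun i => if i = v then c else x i with hy
      have hyne : ∀ i, i ≠ v → y i = x i := fun i hi => by simp [hy, hi]
      have hyA' : ∑ i ∈ A', y i = ∑ i ∈ A', x i :=
        Finset.sum_congr rfl (fun i hi => hyne i (fun h => hv (h ▸ hi)))
      refine ⟨y, ?_, ?_, ?_, ?_⟩
      · intro i
        by_cases h : i = v
        · simpa [hy, h] using hc0
        · rw [hyne i h]; exact hx0 i
      · intro B
        by_cases hvB : v ∈ B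
        · have hBerase : ∑ i ∈ B.erase v, y i = ∑ i ∈ B ∩ A', x i := by
            rw [Finset.sum_congr rfl (fun i hi => hyne i (Finset.ne_of_mem_erase hi))]
            refine (Finset.sum_subset ?_ ?_).symm
            · intro i hi
              rw [Finset.mem_erase]
              have := Finset.mem_inter.mp hi
              exact ⟨fun h => hv (h ▸ this.2), this.1⟩
            · intro i hi hni
              refine hxs i (fun h => hni ?_)
              exact Finset.mem_inter.mpr ⟨Finset.mem_of_mem_erase hi, h⟩
          calc ∑ i ∈ B, y i = y v + ∑ i ∈ B.erase v, y i :=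
                (Finset.add_sum_erase B y hvB).symm
            _ = c + ∑ i ∈ B ∩ A', x i := by rw [hBerase]; simp [hy]
            _ ≤ c + f (B ∩ A') := by
                exact add_le_add_right (hxf (B ∩ A')) c
            _ ≤ f (insert v (B ∩ A')) := by
                have := hsub (B ∩ A') A' Finset.inter_subset_right v hv
                linarith
            _ ≤ f B := by
                refine hmono _ _ (Finset.insert_subset hvB Finset.inter_subset_left)
        · rw [Finset.sum_congr rfl (fun i hi => hyne i (fun h => hvB (h ▸ hi)))]
          exact hxf B
      · intro i hi
        have h1 : i ≠ v := fun h => hi (h ▸ Finset.mem_insert_self v A')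
        have h2 : i ∉ A' := fun h => hi (Finset.mem_insert_of_mem h)
        rw [hyne i h1]; exact hxs i h2
      · rw [Finset.sum_insert hv, hyA', hxA]
        simp [hy, hc]
  · -- upper bound
    rintro r ⟨x, hx0, hxf, rfl⟩
    exact hxf A
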